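/- Let H be a Hopf G-coalgebra, A an H-comodule Poisson algebra, B = A^{AcoH}, M a Poisson (A,H)-Hopf module, and N a B-module that is a trivial right H-comodule. Then there is a functorial k-linear isomorphism ψ : Hom^H_{PA}(A ⊗_B N, M) → Hom^{H₀}_B(N, M^{AcoH}) given by ψ(f)_α(n) = f_α(1_{A_α} ⊗ n), with inverse ψ'(g)_α(a ⊗ n) = a · g_α(n). Consequently the functors N ↦ A ⊗_B N and M ↦ M^{AcoH} form an adjoint pair. -/

import Mathlib

open TensorProduct

noncomputable section

set_option synthInstance.maxHeartbeats 1000000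
set_option maxHeartbeats 2000000

/-- Transport along an equality of indices for a family of modules. -/
def famCast {k : Type*} [CommSemiring k] {G : Type*} {H : G → Type*}
    [∀ α, AddCommMonoid (H α)] [∀ α, Module k (H α)] {x y : G} (h : x = y) :
    H x →ₗ[k] H y := by subst h; exact LinearMap.id

/-- A Hopf `G`-coalgebra over `k`. -/
structure HopfGCoalgebra (k G : Type*) [Field k] [CommGroup G] where
  H : G → Type*
  [ring : ∀ α, Ring (H α)]
  [alg : ∀ α, Algebra k (H α)]
  Δ : ∀ α β : G, H (α * β) →ₐ[k] H α ⊗[k] H β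
  ε : H 1 →ₐ[k] k
  coassoc : ∀ α β γ : G,
    (TensorProduct.assoc k (H α) (H β) (H γ)).toLinearMap ∘ₗ
      TensorProduct.map (Δ α β).toLinearMap LinearMap.id ∘ₗ (Δ (α * β) γ).toLinearMap
    = TensorProduct.map LinearMap.id (Δ β γ).toLinearMap ∘ₗ (Δ α (β * γ)).toLinearMap ∘ₗ
        famCast (k := k) (mul_assoc α β γ)
  counit_left : ∀ α : G,
    (TensorProduct.lid k (H α)).toLinearMap ∘ₗ
      TensorProduct.map ε.toLinearMap LinearMap.id ∘ₗ (Δ 1 α).toLinearMap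
    = famCast (k := k) (one_mul α)
  counit_right : ∀ α : G,
    (TensorProduct.rid k (H α)).toLinearMap ∘ₗ
      TensorProduct.map LinearMap.id ε.toLinearMap ∘ₗ (Δ α 1).toLinearMap
    = famCast (k := k) (mul_one α)
  S : ∀ α : G, H α →ₗ[k] H α⁻¹
  antipode_left : ∀ α : G,
    LinearMap.mul' k (H α) ∘ₗ
      TensorProduct.map (famCast (k := k) (inv_inv α) ∘ₗ S α⁻¹) LinearMap.id ∘ₗ
      (Δ α⁻¹ α).toLinearMap ∘ₗ famCast (k := k) (inv_mul_cancel α).symm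
    = Algebra.linearMap k (H α) ∘ₗ ε.toLinearMap
  antipode_right : ∀ α : G,
    LinearMap.mul' k (H α⁻¹) ∘ₗ
      TensorProduct.map LinearMap.id (S α) ∘ₗ
      (Δ α⁻¹ α).toLinearMap ∘ₗ famCast (k := k) (inv_mul_cancel α).symm
    = Algebra.linearMap k (H α⁻¹) ∘ₗ ε.toLinearMap

attribute [instance] HopfGCoalgebra.ring HopfGCoalgebra.alg
variable {k G : Type*} [Field k] [CommGroup G]

/-- A family of Poisson algebras which is a right `H`-comodule Poisson algebra. -/
structure GComodulePoissonAlgebra (Hc : HopfGCoalgebra k G) where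
  A : G → Type*
  [cring : ∀ α, CommRing (A α)]
  [alg : ∀ α, Algebra k (A α)]
  pb : ∀ α : G, A α →ₗ[k] A α →ₗ[k] A α
  pb_skew : ∀ (α : G) (a b : A α), pb α a b = - pb α b a
  pb_jacobi : ∀ (α : G) (a b c : A α),
    pb α a (pb α b c) = pb α (pb α a b) c + pb α b (pb α a c)
  pb_leibniz : ∀ (α : G) (a b c : A α), pb α a (b * c) = pb α a b * c + b * pb α a c
  ρ : ∀ α β : G, A (α * β) →ₐ[k] A α ⊗[k] Hc.H β
  coassoc : ∀ α β γ : G,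
    (TensorProduct.assoc k (A α) (Hc.H β) (Hc.H γ)).toLinearMap ∘ₗ
      TensorProduct.map (ρ α β).toLinearMap LinearMap.id ∘ₗ (ρ (α * β) γ).toLinearMap
    = TensorProduct.map LinearMap.id (Hc.Δ β γ).toLinearMap ∘ₗ (ρ α (β * γ)).toLinearMap ∘ₗ
        famCast (k := k) (mul_assoc α β γ)
  counit : ∀ α : G,
    (TensorProduct.rid k (A α)).toLinearMap ∘ₗ
      TensorProduct.map LinearMap.id Hc.ε.toLinearMap ∘ₗ (ρ α 1).toLinearMap
    = famCast (k := k) (mul_one α)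
  pb_comp : ∀ α β : G,
    (ρ α β).toLinearMap ∘ₗ TensorProduct.lift (pb (α * β))
    = TensorProduct.map (TensorProduct.lift (pb α)) (LinearMap.mul' k (Hc.H β)) ∘ₗ
        (TensorProduct.tensorTensorTensorComm k (A α) (Hc.H β) (A α) (Hc.H β)).toLinearMap ∘ₗ
        TensorProduct.map (ρ α β).toLinearMap (ρ α β).toLinearMap

attribute [instance] GComodulePoissonAlgebra.cring GComodulePoissonAlgebra.alg

/-- A Poisson `(A,H)`-Hopf module. -/
structure PoissonHopfModule {Hc : HopfGCoalgebra k G}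
    (Ac : GComodulePoissonAlgebra Hc) where
  M : G → Type*
  [acg : ∀ α, AddCommGroup (M α)]
  [mod : ∀ α, Module k (M α)]
  smul : ∀ α : G, Ac.A α →ₗ[k] M α →ₗ[k] M α
  one_smul : ∀ (α : G) (m : M α), smul α 1 m = m
  mul_smul : ∀ (α : G) (a b : Ac.A α) (m : M α), smul α (a * b) m = smul α a (smul α b m)
  dia : ∀ α : G, Ac.A α →ₗ[k] M α →ₗ[k] M α
  dia_lie : ∀ (α : G) (a b : Ac.A α) (m : M α),
    dia α (Ac.pb α a b) m = dia α a (dia α b m) - dia α b (dia α a m)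
  poisson1 : ∀ (α : G) (a b : Ac.A α) (m : M α),
    dia α a (smul α b m) = smul α (Ac.pb α a b) m + smul α b (dia α a m)
  poisson2 : ∀ (α : G) (a b : Ac.A α) (m : M α),
    dia α (a * b) m = smul α a (dia α b m) + smul α b (dia α a m)
  ρ : ∀ α β : G, M (α * β) →ₗ[k] M α ⊗[k] Hc.H β
  coassoc : ∀ α β γ : G,
    (TensorProduct.assoc k (M α) (Hc.H β) (Hc.H γ)).toLinearMap ∘ₗ
      TensorProduct.map (ρ α β) LinearMap.id ∘ₗ ρ (α * β) γ
    = TensorProduct.map LinearMap.id (Hc.Δ β γ).toLinearMap ∘ₗ ρ α (β * γ) ∘ₗ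
        famCast (k := k) (mul_assoc α β γ)
  counit : ∀ α : G,
    (TensorProduct.rid k (M α)).toLinearMap ∘ₗ
      TensorProduct.map LinearMap.id Hc.ε.toLinearMap ∘ₗ ρ α 1
    = famCast (k := k) (mul_one α)
  smul_comp : ∀ α β : G,
    ρ α β ∘ₗ TensorProduct.lift (smul (α * β))
    = TensorProduct.map (TensorProduct.lift (smul α)) (LinearMap.mul' k (Hc.H β)) ∘ₗ
        (TensorProduct.tensorTensorTensorComm k (Ac.A α) (Hc.H β) (M α) (Hc.H β)).toLinearMap ∘ₗ
        TensorProduct.map (Ac.ρ α β).toLinearMap (ρ α β)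
  dia_comp : ∀ α β : G,
    ρ α β ∘ₗ TensorProduct.lift (dia (α * β))
    = TensorProduct.map (TensorProduct.lift (dia α)) (LinearMap.mul' k (Hc.H β)) ∘ₗ
        (TensorProduct.tensorTensorTensorComm k (Ac.A α) (Hc.H β) (M α) (Hc.H β)).toLinearMap ∘ₗ
        TensorProduct.map (Ac.ρ α β).toLinearMap (ρ α β)

attribute [instance] PoissonHopfModule.acg PoissonHopfModule.mod

variable {Hc : HopfGCoalgebra k G} {Ac : GComodulePoissonAlgebra Hc}

/-- A coinvariant family for a Poisson Hopf module. -/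
def PoissonHopfModule.IsCoinv (Mc : PoissonHopfModule Ac) (m : ∀ γ : G, Mc.M γ) : Prop :=
  ∀ γ β : G, Mc.ρ γ β (m (γ * β)) = m γ ⊗ₜ[k] (1 : Hc.H β)

/-- A coinvariant family for the comodule algebra `A`. -/
def GComodulePoissonAlgebra.IsCoinv (Ac : GComodulePoissonAlgebra Hc)
    (a : ∀ γ : G, Ac.A γ) : Prop :=
  ∀ γ β : G, Ac.ρ γ β (a (γ * β)) = a γ ⊗ₜ[k] (1 : Hc.H β)

/-- `M^{A_α}_α`, the space of elements killed by the Lie action. -/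
def PoissonHopfModule.diaInv (Mc : PoissonHopfModule Ac) (α : G) :
    Submodule k (Mc.M α) where
  carrier := {m | ∀ a : Ac.A α, Mc.dia α a m = 0}
  zero_mem' := fun a => map_zero _
  add_mem' := fun {x y} hx hy a => by rw [map_add, hx a, hy a, add_zero]
  smul_mem' := fun c x hx a => by rw [map_smul, hx a, smul_zero]

/-- The Poisson-central part `A^{A_α}_α` of `A_α`. -/
def GComodulePoissonAlgebra.center (Ac : GComodulePoissonAlgebra Hc) (α : G) :
    Submodule k (Ac.A α) where
  carrier := {a | ∀ b : Ac.A α, Ac.pb α a b = 0}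
  zero_mem' := fun b => by rw [map_zero]; rfl
  add_mem' := fun {x y} hx hy b => by rw [map_add]; simp [hx b, hy b]
  smul_mem' := fun c x hx b => by rw [map_smul]; simp [hx b]

/-- `M^{coH}_α` for a Poisson Hopf module. -/
def PoissonHopfModule.coinv (Mc : PoissonHopfModule Ac) (α : G) : Set (Mc.M α) :=
  {x | ∃ m : ∀ γ : G, Mc.M γ, Mc.IsCoinv m ∧ m α = x}

/-- `A^{coH}_α`. -/
def GComodulePoissonAlgebra.coinv (Ac : GComodulePoissonAlgebra Hc) (α : G) :
    Set (Ac.A α) :=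
  {x | ∃ a : ∀ γ : G, Ac.A γ, Ac.IsCoinv a ∧ a α = x}

section BX

lemma pb_one_right (Ac : GComodulePoissonAlgebra Hc) (α : G) (a : Ac.A α) :
    Ac.pb α a 1 = 0 := by
  have h := Ac.pb_leibniz α a 1 1
  simp only [mul_one, one_mul] at h
  exact right_eq_add.mp h

lemma pb_one_left (Ac : GComodulePoissonAlgebra Hc) (α : G) (b : Ac.A α) :
    Ac.pb α 1 b = 0 := by
  rw [Ac.pb_skew, pb_one_right, neg_zero]

variable (Ac) in
/-- `B = A^{AcoH}`: the coinvariant families with values in the Poisson center,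
as a subalgebra of `∏_γ A_γ`. -/
def Bfam : Subalgebra k (∀ γ : G, Ac.A γ) where
  carrier := {a | Ac.IsCoinv a ∧ ∀ (γ : G) (b : Ac.A γ), Ac.pb γ (a γ) b = 0}
  mul_mem' := by
    rintro x y ⟨hx, hx'⟩ ⟨hy, hy'⟩
    refine ⟨fun γ β => ?_, fun γ b => ?_⟩
    · rw [Pi.mul_apply, map_mul, hx γ β, hy γ β, Pi.mul_apply,
        Algebra.TensorProduct.tmul_mul_tmul, mul_one]
    · rw [Pi.mul_apply, Ac.pb_skew, Ac.pb_leibniz]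
      have h1 : Ac.pb γ b (x γ) = 0 := by rw [Ac.pb_skew, hx' γ b, neg_zero]
      have h2 : Ac.pb γ b (y γ) = 0 := by rw [Ac.pb_skew, hy' γ b, neg_zero]
      rw [h1, h2, zero_mul, mul_zero, add_zero, neg_zero]
  one_mem' := by
    refine ⟨fun γ β => ?_, fun γ b => ?_⟩
    · rw [Pi.one_apply, map_one, Pi.one_apply, Algebra.TensorProduct.one_def]
    · rw [Pi.one_apply]; exact pb_one_left Ac γ b
  add_mem' := by
    rintro x y ⟨hx, hx'⟩ ⟨hy, hy'⟩
    refine ⟨fun γ β => ?_, fun γ b => ?_⟩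
    · rw [Pi.add_apply, map_add, hx γ β, hy γ β, Pi.add_apply,
        TensorProduct.add_tmul]
    · rw [Pi.add_apply, map_add, LinearMap.add_apply, hx' γ b, hy' γ b, add_zero]
  algebraMap_mem' := by
    intro r
    refine ⟨fun γ β => ?_, fun γ b => ?_⟩
    · show (Ac.ρ γ β) (algebraMap k (Ac.A (γ * β)) r) = _
      rw [AlgHom.commutes, Algebra.TensorProduct.algebraMap_apply]
      simp [Pi.algebraMap_apply]
    · show Ac.pb γ (algebraMap k (Ac.A γ) r) b = 0
      rw [Algebra.algebraMap_eq_smul_one, map_smul, LinearMap.smul_apply,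
        pb_one_left, smul_zero]

variable (Ac) in
/-- `M^{AcoH}`: the coinvariant families killed by the Lie action, as a
`k`-submodule of `∏_γ M_γ`. -/
def Xfam (Mc : PoissonHopfModule Ac) : Submodule k (∀ γ : G, Mc.M γ) where
  carrier := {m | Mc.IsCoinv m ∧ ∀ (γ : G) (a : Ac.A γ), Mc.dia γ a (m γ) = 0}
  zero_mem' := by
    refine ⟨fun γ β => ?_, fun γ a => ?_⟩
    · show Mc.ρ γ β 0 = (0 : Mc.M γ) ⊗ₜ[k] (1 : Hc.H β)
      rw [map_zero, TensorProduct.zero_tmul]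
    · show Mc.dia γ a 0 = 0
      rw [map_zero]
  add_mem' := by
    rintro x y ⟨hx, hx'⟩ ⟨hy, hy'⟩
    refine ⟨fun γ β => ?_, fun γ a => ?_⟩
    · rw [Pi.add_apply, map_add, hx γ β, hy γ β, Pi.add_apply,
        TensorProduct.add_tmul]
    · rw [Pi.add_apply, map_add, hx' γ a, hy' γ a, add_zero]
  smul_mem' := by
    rintro c x ⟨hx, hx'⟩
    refine ⟨fun γ β => ?_, fun γ a => ?_⟩
    · rw [Pi.smul_apply, map_smul, hx γ β, Pi.smul_apply, TensorProduct.smul_tmul']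
    · rw [Pi.smul_apply, map_smul, hx' γ a, smul_zero]

variable (Ac) {Mc : PoissonHopfModule Ac}

instance instAlgebraBfam (α : G) : Algebra ↥(Bfam Ac) (Ac.A α) :=
  (((Pi.evalAlgHom k (fun γ => Ac.A γ) α).comp (Bfam Ac).val) :
    ↥(Bfam Ac) →+* Ac.A α).toAlgebra

lemma algebraMap_Bfam_apply (α : G) (b : ↥(Bfam Ac)) :
    algebraMap ↥(Bfam Ac) (Ac.A α) b = (b : ∀ γ : G, Ac.A γ) α := rfl

instance (α : G) : IsScalarTower k ↥(Bfam Ac) (Ac.A α) :=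
  ⟨fun c b a => by
    have hcb : ((c • b : ↥(Bfam Ac)) : ∀ γ : G, Ac.A γ) α
        = c • ((b : ∀ γ : G, Ac.A γ) α) := rfl
    calc (c • b) • a = algebraMap ↥(Bfam Ac) (Ac.A α) (c • b) * a :=
          Algebra.smul_def _ _
      _ = (c • ((b : ∀ γ : G, Ac.A γ) α)) * a := by
          rw [algebraMap_Bfam_apply, hcb]
      _ = c • (((b : ∀ γ : G, Ac.A γ) α) * a) := smul_mul_assoc c _ a
      _ = c • (b • a) := by rw [Algebra.smul_def b a, algebraMap_Bfam_apply]⟩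

instance (α : G) : SMulCommClass ↥(Bfam Ac) k (Ac.A α) :=
  ⟨fun b c a => by
    calc b • (c • a) = (b : ∀ γ : G, Ac.A γ) α * (c • a) := by
          rw [Algebra.smul_def b (c • a), algebraMap_Bfam_apply]
      _ = c • ((b : ∀ γ : G, Ac.A γ) α * a) := mul_smul_comm c _ a
      _ = c • (b • a) := by rw [Algebra.smul_def b a, algebraMap_Bfam_apply]⟩

instance instSMulBfamXfam : SMul ↥(Bfam Ac) ↥(Xfam Ac Mc) where
  smul b m := ⟨fun γ => Mc.smul γ ((b : ∀ γ : G, Ac.A γ) γ) ((m : ∀ γ : G, Mc.M γ) γ), by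
    obtain ⟨hb, hb'⟩ := b.2
    obtain ⟨hm, hm'⟩ := m.2
    refine ⟨fun γ β => ?_, fun γ a => ?_⟩
    · have h := congrArg (fun F => F ((b : ∀ γ : G, Ac.A γ) (γ * β) ⊗ₜ[k]
        (m : ∀ γ : G, Mc.M γ) (γ * β))) (Mc.smul_comp γ β)
      simp only [LinearMap.comp_apply, TensorProduct.lift.tmul,
        TensorProduct.map_tmul, LinearEquiv.coe_toLinearMap] at h
      rw [h]
      simp only [AlgHom.toLinearMap_apply, hb γ β, hm γ β,
        TensorProduct.tensorTensorTensorComm_tmul, TensorProduct.map_tmul,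
        TensorProduct.lift.tmul, LinearMap.mul'_apply, mul_one]
    · have h1 : Ac.pb γ a ((b : ∀ γ : G, Ac.A γ) γ) = 0 := by
        rw [Ac.pb_skew, hb' γ a, neg_zero]
      rw [Mc.poisson1, h1, map_zero, LinearMap.zero_apply, zero_add,
        hm' γ a, map_zero]⟩

instance instModuleBfamXfam : Module ↥(Bfam Ac) ↥(Xfam Ac Mc) where
  one_smul m := Subtype.ext (funext fun γ => Mc.one_smul γ _)
  mul_smul b b' m := Subtype.ext (funext fun γ => Mc.mul_smul γ _ _ _)
  smul_zero b := Subtype.ext (funext fun γ => map_zero _)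
  smul_add b m m' := Subtype.ext (funext fun γ => map_add _ _ _)
  add_smul b b' m := Subtype.ext (funext fun γ => by
    have h : ((b + b' : ↥(Bfam Ac)) : ∀ γ : G, Ac.A γ) γ
        = (b : ∀ γ : G, Ac.A γ) γ + (b' : ∀ γ : G, Ac.A γ) γ := rfl
    change Mc.smul γ (((b + b' : ↥(Bfam Ac)) : ∀ γ : G, Ac.A γ) γ) _
      = Mc.smul γ _ _ + Mc.smul γ _ _
    rw [h, map_add, LinearMap.add_apply])
  zero_smul m := Subtype.ext (funext fun γ => by
    have h : ((0 : ↥(Bfam Ac)) : ∀ γ : G, Ac.A γ) γ = 0 := rfl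
    change Mc.smul γ (((0 : ↥(Bfam Ac)) : ∀ γ : G, Ac.A γ) γ) _ = 0
    rw [h, map_zero, LinearMap.zero_apply])

end BX

instance : IsScalarTower k ↥(Bfam Ac) ↥(Xfam Ac Mc) :=
  ⟨fun c b m => Subtype.ext (funext fun γ => by
    have h : ((c • b : ↥(Bfam Ac)) : ∀ γ : G, Ac.A γ) γ
        = c • ((b : ∀ γ : G, Ac.A γ) γ) := rfl
    change Mc.smul γ (((c • b : ↥(Bfam Ac)) : ∀ γ : G, Ac.A γ) γ) _ = _
    rw [h, map_smul, LinearMap.smul_apply]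
    rfl)⟩

/-- The component `A_α ⊗_B M^{AcoH}` of `A ⊗_B M^{AcoH}`. -/
abbrev TB (Mc : PoissonHopfModule Ac) (α : G) : Type _ :=
  Ac.A α ⊗[↥(Bfam Ac)] ↥(Xfam Ac Mc)

variable {Mc : PoissonHopfModule Ac}

/-- The `k`-linear map `x ↦ x ⊗_B m`. -/
def mkTB (m : ↥(Xfam Ac Mc)) (μ : G) : Ac.A μ →ₗ[k] TB Mc μ where
  toFun x := x ⊗ₜ[↥(Bfam Ac)] m
  map_add' x y := TensorProduct.add_tmul x y m
  map_smul' c x := (TensorProduct.smul_tmul' c x m).symm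

section Adjunction

variable (Mc : PoissonHopfModule Ac) (N₀ : Type*) [AddCommGroup N₀] [Module k N₀]
  [Module ↥(Bfam Ac) N₀] [IsScalarTower k ↥(Bfam Ac) N₀]

/-- The `k`-linear map `x ↦ x ⊗_B n` into `A_μ ⊗_B N`. -/
def mkTN (n : N₀) (μ : G) : Ac.A μ →ₗ[k] (Ac.A μ ⊗[↥(Bfam Ac)] N₀) where
  toFun x := x ⊗ₜ[↥(Bfam Ac)] n
  map_add' x y := TensorProduct.add_tmul x y n
  map_smul' c x := (TensorProduct.smul_tmul' c x n).symm

/-- Morphisms of Poisson `(A,H)`-Hopf modules `A ⊗_B N → M`, for a trivial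
`H`-comodule  `B`-module `N`. -/
def IsPAHomTN (f : ∀ α : G, (Ac.A α ⊗[↥(Bfam Ac)] N₀) →ₗ[k] Mc.M α) : Prop :=
  (∀ (α : G) (a' a : Ac.A α) (n : N₀),
    f α ((a' * a) ⊗ₜ[↥(Bfam Ac)] n) = Mc.smul α a' (f α (a ⊗ₜ[↥(Bfam Ac)] n))) ∧
  (∀ (α : G) (a' a : Ac.A α) (n : N₀),
    f α (Ac.pb α a' a ⊗ₜ[↥(Bfam Ac)] n) = Mc.dia α a' (f α (a ⊗ₜ[↥(Bfam Ac)] n))) ∧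
  (∀ (μ ν : G) (a : Ac.A (μ * ν)) (n : N₀),
    Mc.ρ μ ν (f (μ * ν) (a ⊗ₜ[↥(Bfam Ac)] n))
      = TensorProduct.map (f μ) LinearMap.id
          (TensorProduct.map (mkTN (Ac := Ac) N₀ n μ)
            (LinearMap.id : Hc.H ν →ₗ[k] Hc.H ν) (Ac.ρ μ ν a)))

variable {Mc N₀}

/-- `M_α` as a `B`-module via `smul`. -/
instance instModuleBfamM (α : G) : Module ↥(Bfam Ac) (Mc.M α) where
  smul b m := Mc.smul α ((b : ∀ γ : G, Ac.A γ) α) m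
  one_smul m := Mc.one_smul α m
  mul_smul b b' m := Mc.mul_smul α _ _ m
  smul_zero b := map_zero _
  smul_add b m m' := map_add _ m m'
  add_smul b b' m := by
    show Mc.smul α ((b : ∀ γ : G, Ac.A γ) α + (b' : ∀ γ : G, Ac.A γ) α) m = _
    rw [map_add, LinearMap.add_apply]; rfl
  zero_smul m := by
    show Mc.smul α (0 : Ac.A α) m = 0
    rw [map_zero, LinearMap.zero_apply]

instance (α : G) : IsScalarTower k ↥(Bfam Ac) (Mc.M α) :=
  ⟨fun c b m => by
    show Mc.smul α (c • ((b : ∀ γ : G, Ac.A γ) α)) m = c • Mc.smul α _ m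
    rw [map_smul, LinearMap.smul_apply]⟩

/-- `ψ(f)`: the `B`-linear map `n ↦ (f_γ(1 ⊗ n))_γ`. -/
def psiFun (f : {f : ∀ α : G, (Ac.A α ⊗[↥(Bfam Ac)] N₀) →ₗ[k] Mc.M α //
    IsPAHomTN Mc N₀ f}) : N₀ →ₗ[↥(Bfam Ac)] ↥(Xfam Ac Mc) where
  toFun n := ⟨fun γ => f.1 γ ((1 : Ac.A γ) ⊗ₜ[↥(Bfam Ac)] n), by
    refine ⟨fun γ β => ?_, fun γ a => ?_⟩
    · have h := f.2.2.2 γ β 1 n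
      rw [map_one, Algebra.TensorProduct.one_def] at h
      rw [h]
      simp [mkTN]
    · have h := f.2.2.1 γ a 1 n
      rw [pb_one_right, TensorProduct.zero_tmul, map_zero] at h
      exact h.symm⟩
  map_add' n n' := Subtype.ext (funext fun γ => by
    show f.1 γ _ = f.1 γ _ + f.1 γ _
    rw [TensorProduct.tmul_add, map_add])
  map_smul' b n := Subtype.ext (funext fun γ => by
    show f.1 γ ((1 : Ac.A γ) ⊗ₜ[↥(Bfam Ac)] (b • n))
      = Mc.smul γ ((b : ∀ γ : G, Ac.A γ) γ) (f.1 γ ((1 : Ac.A γ) ⊗ₜ[↥(Bfam Ac)] n))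
    have h1 : (1 : Ac.A γ) ⊗ₜ[↥(Bfam Ac)] (b • n)
        = (((b : ∀ γ : G, Ac.A γ) γ) * 1) ⊗ₜ[↥(Bfam Ac)] n := by
      rw [TensorProduct.tmul_smul, TensorProduct.smul_tmul', Algebra.smul_def,
        algebraMap_Bfam_apply]
    rw [h1, f.2.1 γ _ 1 n])

/-- `ψ'(g)_α`: the `k`-linear map `a ⊗ n ↦ a · g(n)_α`. -/
def psiInvMap (g : N₀ →ₗ[↥(Bfam Ac)] ↥(Xfam Ac Mc)) (α : G) :
    (Ac.A α ⊗[↥(Bfam Ac)] N₀) →ₗ[k] Mc.M α :=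
  (TensorProduct.lift (LinearMap.mk₂ ↥(Bfam Ac)
    (fun a n => Mc.smul α a (((g n : ↥(Xfam Ac Mc)) : ∀ δ : G, Mc.M δ) α))
    (fun a a' n => by simp only [map_add, LinearMap.add_apply])
    (fun b a n => by
      show Mc.smul α (((b : ∀ γ : G, Ac.A γ) α) * a) _ = Mc.smul α ((b : ∀ γ : G, Ac.A γ) α) _
      rw [Mc.mul_smul])
    (fun a n n' => by simp only [map_add, Submodule.coe_add, Pi.add_apply])
    (fun b a n => by
      show Mc.smul α a (((g (b • n) : ↥(Xfam Ac Mc)) : ∀ δ : G, Mc.M δ) α) = _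
      rw [map_smul]
      show Mc.smul α a (Mc.smul α ((b : ∀ γ : G, Ac.A γ) α) _)
        = Mc.smul α ((b : ∀ γ : G, Ac.A γ) α) (Mc.smul α a _)
      rw [← Mc.mul_smul, ← Mc.mul_smul, mul_comm]))).restrictScalars k

@[simp] lemma psiInvMap_apply (g : N₀ →ₗ[↥(Bfam Ac)] ↥(Xfam Ac Mc)) (α : G)
    (a : Ac.A α) (n : N₀) :
    psiInvMap g α (a ⊗ₜ[↥(Bfam Ac)] n)
      = Mc.smul α a (((g n : ↥(Xfam Ac Mc)) : ∀ δ : G, Mc.M δ) α) := rfl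

lemma psiInvMap_isPAHom (g : N₀ →ₗ[↥(Bfam Ac)] ↥(Xfam Ac Mc)) :
    IsPAHomTN Mc N₀ (psiInvMap g) := by
  refine ⟨fun α a' a n => ?_, fun α a' a n => ?_, fun μ ν a n => ?_⟩
  · simp only [psiInvMap_apply, Mc.mul_smul]
  · obtain ⟨-, hdia⟩ := (g n).2
    simp only [psiInvMap_apply, Mc.poisson1, hdia α a', map_zero, add_zero]
  · obtain ⟨hco, -⟩ := (g n).2
    have key : ∀ t : Ac.A μ ⊗[k] Hc.H ν,
        (TensorProduct.map (TensorProduct.lift (Mc.smul μ)) (LinearMap.mul' k (Hc.H ν)))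
          ((TensorProduct.tensorTensorTensorComm k (Ac.A μ) (Hc.H ν) (Mc.M μ) (Hc.H ν))
            (t ⊗ₜ[k] (((g n : ↥(Xfam Ac Mc)) : ∀ δ : G, Mc.M δ) μ ⊗ₜ[k] (1 : Hc.H ν))))
        = TensorProduct.map (psiInvMap g μ) LinearMap.id
            (TensorProduct.map (mkTN (Ac := Ac) N₀ n μ) LinearMap.id t) := by
      intro t
      induction t using TensorProduct.induction_on with
      | zero => simp
      | tmul a0 h =>
          simp [mkTN, TensorProduct.tensorTensorTensorComm_tmul, TensorProduct.map_tmul,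
            TensorProduct.lift.tmul, LinearMap.mul'_apply, mul_one]
      | add s t hs2 ht2 =>
          simp only [TensorProduct.add_tmul, map_add, hs2, ht2]
    have hs := congrArg
      (fun F => F (a ⊗ₜ[k] ((g n : ↥(Xfam Ac Mc)) : ∀ δ : G, Mc.M δ) (μ * ν)))
      (Mc.smul_comp μ ν)
    simp only [LinearMap.comp_apply, TensorProduct.lift.tmul, TensorProduct.map_tmul,
      LinearEquiv.coe_toLinearMap] at hs
    rw [psiInvMap_apply, hs, hco μ ν, key]
    rfl

variable (Mc N₀)

/-- The adjunction isomorphism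
`ψ : Hom^H_{PA}(A ⊗_B N, M) ≅ Hom^{H₀}_B(N, M^{AcoH})`, `ψ(f)(n)_α = f_α(1 ⊗ n)`,
with inverse `ψ'(g)_α(a ⊗ n) = a · g(n)_α`; hence the functors `N ↦ A ⊗_B N` and
`M ↦ M^{AcoH}` are adjoint. -/
theorem adjunction_iso :
    ∃ e : {f : ∀ α : G, (Ac.A α ⊗[↥(Bfam Ac)] N₀) →ₗ[k] Mc.M α //
            IsPAHomTN Mc N₀ f} ≃ (N₀ →ₗ[↥(Bfam Ac)] ↥(Xfam Ac Mc)),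
      (∀ (f : {f : ∀ α : G, (Ac.A α ⊗[↥(Bfam Ac)] N₀) →ₗ[k] Mc.M α //
          IsPAHomTN Mc N₀ f}) (n : N₀) (γ : G),
        ((e f n : ↥(Xfam Ac Mc)) : ∀ δ : G, Mc.M δ) γ
          = f.1 γ ((1 : Ac.A γ) ⊗ₜ[↥(Bfam Ac)] n)) ∧
      (∀ (g : N₀ →ₗ[↥(Bfam Ac)] ↥(Xfam Ac Mc)) (α : G) (a : Ac.A α) (n : N₀),
        (e.symm g).1 α (a ⊗ₜ[↥(Bfam Ac)] n)
          = Mc.smul α a (((g n : ↥(Xfam Ac Mc)) : ∀ δ : G, Mc.M δ) α)) := by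
  refine ⟨⟨psiFun, fun g => ⟨psiInvMap g, psiInvMap_isPAHom g⟩, ?_, ?_⟩, fun f n γ => rfl,
    fun g α a n => rfl⟩
  · intro f
    refine Subtype.ext (funext fun α => LinearMap.ext fun x => ?_)
    induction x using TensorProduct.induction_on with
    | zero => simp only [map_zero]
    | tmul a n =>
        show Mc.smul α a (f.1 α ((1 : Ac.A α) ⊗ₜ[↥(Bfam Ac)] n)) = f.1 α _
        rw [← f.2.1 α a 1 n, mul_one]
    | add x y hx hy => simp only [map_add, hx, hy]
  · intro g
    refine LinearMap.ext fun n => Subtype.ext (funext fun γ => ?_)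
    show Mc.smul γ (1 : Ac.A γ) (((g n : ↥(Xfam Ac Mc)) : ∀ δ : G, Mc.M δ) γ) = _
    rw [Mc.one_smul]

end Adjunction
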